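/- Let G be a finite simple graph and let v be a vertex of G with deg_G(v) ≥ 1. Then γst(G) − deg_G(v) ≤ γst(G − v), where G − v denotes the graph obtained from G by deleting the vertex v. -/

import Mathlib

/-- The degree of a vertex `x` in a graph `G`. -/
noncomputable def sdeg {V : Type*} (G : SimpleGraph V) (x : V) : ℕ :=
  (G.neighborSet x).ncard

/-- `D` is a strong dominating set of `G`: every vertex `x ∉ D` has a neighbor
`y ∈ D` with `deg x ≤ deg y`. -/
def IsStrongDominating {V : Type*} (G : SimpleGraph V) (D : Set V) : Prop :=
  ∀ x ∉ D, ∃ y ∈ D, G.Adj x y ∧ sdeg G x ≤ sdeg G y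

/-- The strong domination number of `G`. -/
noncomputable def sdn {V : Type*} (G : SimpleGraph V) : ℕ :=
  sInf {n | ∃ D : Set V, IsStrongDominating G D ∧ D.ncard = n}

/-- Vertex deletion `G - v`: the induced subgraph on the complement of `{v}`. -/
def delVtx {V : Type*} (G : SimpleGraph V) (v : V) : SimpleGraph {x : V // x ≠ v} where
  Adj a b := G.Adj a.1 b.1
  symm := ⟨fun a b h => G.adj_symm h⟩
  loopless := ⟨fun a h => G.irrefl h⟩

/-- Vertex contraction `G / v`: delete `v` and put a clique on its open neighborhood. -/
def contractVtx {V : Type*} (G : SimpleGraph V) (v : V) : SimpleGraph {x : V // x ≠ v} where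
  Adj a b := a ≠ b ∧ (G.Adj a.1 b.1 ∨ (G.Adj v a.1 ∧ G.Adj v b.1))
  symm := ⟨by
    rintro a b ⟨hab, h | ⟨ha, hb⟩⟩
    · exact ⟨hab.symm, Or.inl h.symm⟩
    · exact ⟨hab.symm, Or.inr ⟨hb, ha⟩⟩⟩
  loopless := ⟨by rintro a ⟨h, -⟩; exact h rfl⟩

/-- `G ⊙ v`: remove all edges between any pair of neighbors of `v`. -/
def odotVtx {V : Type*} (G : SimpleGraph V) (v : V) : SimpleGraph V where
  Adj x y := G.Adj x y ∧ ¬(G.Adj v x ∧ G.Adj v y)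
  symm := ⟨by
    rintro x y ⟨h, hn⟩
    exact ⟨h.symm, fun hc => hn ⟨hc.2, hc.1⟩⟩⟩
  loopless := ⟨by rintro x ⟨h, -⟩; exact G.irrefl h⟩

/-- Edge contraction `G / uv`: merge `v` into `u`. -/
def contractEdge {V : Type*} (G : SimpleGraph V) (u v : V) : SimpleGraph {x : V // x ≠ v} where
  Adj a b := a ≠ b ∧ (G.Adj a.1 b.1 ∨ (a.1 = u ∧ G.Adj v b.1) ∨ (b.1 = u ∧ G.Adj v a.1))
  symm := ⟨by
    rintro a b ⟨hab, h | h | h⟩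
    · exact ⟨hab.symm, Or.inl h.symm⟩
    · exact ⟨hab.symm, Or.inr (Or.inr h)⟩
    · exact ⟨hab.symm, Or.inr (Or.inl h)⟩⟩
  loopless := ⟨by rintro a ⟨h, -⟩; exact h rfl⟩

/-- The star `K_{1,n}` with center `none` and leaves `some i`. -/
def starG (n : ℕ) : SimpleGraph (Option (Fin n)) where
  Adj a b := (a = none ∧ b ≠ none) ∨ (a ≠ none ∧ b = none)
  symm := ⟨by
    rintro a b (⟨h1, h2⟩ | ⟨h1, h2⟩)
    · exact Or.inr ⟨h2, h1⟩
    · exact Or.inl ⟨h2, h1⟩⟩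
  loopless := ⟨by
    rintro a (⟨h1, h2⟩ | ⟨h1, h2⟩)
    exacts [h2 h1, h1 h2]⟩

/-- The path graph `P_n` on vertices `0, …, n-1`, consecutive integers adjacent. -/
def pathG (n : ℕ) : SimpleGraph (Fin n) where
  Adj i j := i.1 + 1 = j.1 ∨ j.1 + 1 = i.1
  symm := ⟨fun i j h => h.symm⟩
  loopless := ⟨by rintro i (h | h) <;> omega⟩

lemma isStrongDominating_univ {V : Type*} (G : SimpleGraph V) :
    IsStrongDominating G Set.univ := fun x hx => absurd (Set.mem_univ x) hx

lemma sdn_le_ncard {V : Type*} (G : SimpleGraph V) (D : Set V)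
    (h : IsStrongDominating G D) : sdn G ≤ D.ncard := Nat.sInf_le ⟨D, h, rfl⟩

lemma sdeg_delVtx {V : Type*} (G : SimpleGraph V) (v : V) (a : {x : V // x ≠ v}) :
    sdeg (delVtx G v) a = (G.neighborSet a.1 \ {v}).ncard := by
  have himg : Subtype.val '' ((delVtx G v).neighborSet a) = G.neighborSet a.1 \ {v} := by
    ext x
    simp only [Set.mem_image, Set.mem_diff, Set.mem_singleton_iff,
      SimpleGraph.mem_neighborSet, delVtx]
    constructor
    · rintro ⟨b, hb, rfl⟩; exact ⟨hb, b.2⟩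
    · rintro ⟨hx, hxv⟩; exact ⟨⟨x, hxv⟩, hx, rfl⟩
  rw [sdeg, ← himg, Set.ncard_image_of_injective _ Subtype.val_injective]

/-- if deg_G(v) ≥ 1 then γst(G) − deg_G(v) ≤ γst(G − v). -/
theorem sdn_sub_deg_le_sdn_delVtx {V : Type*} [Fintype V] (G : SimpleGraph V) (v : V)
    (hv : 1 ≤ sdeg G v) :
    (sdn G : ℤ) - (sdeg G v : ℤ) ≤ (sdn (delVtx G v) : ℤ) := by
  classical
  have hne : {n | ∃ D : Set {x : V // x ≠ v},
      IsStrongDominating (delVtx G v) D ∧ D.ncard = n}.Nonempty :=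
    ⟨Set.univ.ncard, Set.univ, isStrongDominating_univ _, rfl⟩
  obtain ⟨D', hD', hcard⟩ := Nat.sInf_mem hne
  have hle : ∀ a : {x : V // x ≠ v}, sdeg (delVtx G v) a ≤ sdeg G a.1 := by
    intro a
    rw [sdeg_delVtx]
    exact Set.ncard_le_ncard Set.diff_subset (Set.toFinite _)
  have heq : ∀ a : {x : V // x ≠ v}, ¬ G.Adj a.1 v → sdeg (delVtx G v) a = sdeg G a.1 := by
    intro a ha
    rw [sdeg_delVtx, sdeg, Set.diff_singleton_eq_self]
    simpa using ha
  -- common step: dominate vertices other than v and outside N(v)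
  have generic : ∀ (S : Set V) (x : V), x ∉ Subtype.val '' D' ∪ S → x ≠ v → ¬ G.Adj v x →
      ∃ y ∈ Subtype.val '' D' ∪ S, G.Adj x y ∧ sdeg G x ≤ sdeg G y := by
    intro S x hx hxv hxN
    rw [Set.mem_union, not_or] at hx
    have hxD' : (⟨x, hxv⟩ : {x : V // x ≠ v}) ∉ D' := by
      intro h; exact hx.1 ⟨⟨x, hxv⟩, h, rfl⟩
    obtain ⟨b, hb, hadj, hdeg⟩ := hD' ⟨x, hxv⟩ hxD'
    refine ⟨b.1, Or.inl ⟨b, hb, rfl⟩, hadj, ?_⟩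
    calc sdeg G x = sdeg (delVtx G v) ⟨x, hxv⟩ :=
          (heq ⟨x, hxv⟩ (fun h => hxN h.symm)).symm
      _ ≤ sdeg (delVtx G v) b := hdeg
      _ ≤ sdeg G b.1 := hle b
  have key : sdn G ≤ sdn (delVtx G v) + sdeg G v := by
    by_cases h : ∃ u, G.Adj v u ∧ sdeg G v ≤ sdeg G u
    · -- use D' ∪ N(v)
      obtain ⟨u, hu, hud⟩ := h
      have hsd : IsStrongDominating G (Subtype.val '' D' ∪ G.neighborSet v) := by
        intro x hx
        by_cases hxv : x = v
        · exact ⟨u, Or.inr hu, hxv ▸ hu, hxv ▸ hud⟩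
        · have hxN : ¬ G.Adj v x := fun hadj => hx (Or.inr hadj)
          exact generic _ x hx hxv hxN
      calc sdn G ≤ (Subtype.val '' D' ∪ G.neighborSet v).ncard := sdn_le_ncard _ _ hsd
        _ ≤ (Subtype.val '' D').ncard + (G.neighborSet v).ncard :=
            Set.ncard_union_le _ _
        _ = sdn (delVtx G v) + sdeg G v := by
            rw [Set.ncard_image_of_injective _ Subtype.val_injective, hcard]; rfl
    · push_neg at h
      -- all neighbors of v have smaller degree; keep v, drop one neighbor u
      have hvne : (G.neighborSet v).Nonempty := by
        rw [← Set.ncard_pos (Set.toFinite _)]; exact hv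
      obtain ⟨u, hu⟩ := hvne
      set S : Set V := (G.neighborSet v \ {u}) ∪ {v} with hS
      have hsd : IsStrongDominating G (Subtype.val '' D' ∪ S) := by
        intro x hx
        have hxv : x ≠ v := by
          rintro rfl; exact hx (Or.inr (Or.inr rfl))
        by_cases hxu : x = u
        · subst hxu
          exact ⟨v, Or.inr (Or.inr rfl), hu.symm, (h x hu).le⟩
        · have hxN : ¬ G.Adj v x := fun hadj => hx (Or.inr (Or.inl ⟨hadj, hxu⟩))
          exact generic _ x hx hxv hxN
      calc sdn G ≤ (Subtype.val '' D' ∪ S).ncard := sdn_le_ncard _ _ hsd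
        _ ≤ (Subtype.val '' D').ncard + S.ncard := Set.ncard_union_le _ _
        _ ≤ sdn (delVtx G v) + sdeg G v := by
            have h0 : (Subtype.val '' D').ncard = sdn (delVtx G v) := by
              rw [Set.ncard_image_of_injective _ Subtype.val_injective, hcard]; rfl
            have h1 : S.ncard ≤ (G.neighborSet v \ {u}).ncard + 1 := by
              rw [hS, Set.union_singleton]
              exact Set.ncard_insert_le _ _
            have h2 : (G.neighborSet v \ {u}).ncard = sdeg G v - 1 := by
              rw [Set.ncard_diff_singleton_of_mem hu]; rfl
            omega
  omega
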